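/- For every real x ≥ 0 and every integer n ≥ 1, the second central moment satisfies e^{-2-nx}·Σ_{k₁=0}^∞ Σ_{k₂=0}^∞ ((nx/2 + 1)^{k₁+k₂}/(k₁!·k₂!))·((k₁+k₂)/n − x)² = x/n + 6/n²; that is, G_n((e₁ − x)²; x) = x/n + 6/n² for the operator attached to the multiple Sheffer polynomials (x+1)^{k₁+k₂}, where (e₁ − x)² denotes the function s ↦ (s − x)². -/
import Mathlib

open Real

private lemma w1_summable (y : ℝ) : Summable (fun k : ℕ => y ^ k / k.factorial) :=
  Real.summable_pow_div_factorial y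

private lemma w1_tsum (y : ℝ) : ∑' k : ℕ, y ^ k / k.factorial = Real.exp y := by
  rw [Real.exp_eq_exp_ℝ, NormedSpace.exp_eq_tsum_div]

private lemma w2_succ (y : ℝ) (k : ℕ) :
    ((k + 1 : ℕ) : ℝ) * y ^ (k + 1) / (k + 1).factorial = y * (y ^ k / k.factorial) := by
  have h : ((k.factorial : ℝ)) ≠ 0 := Nat.cast_ne_zero.mpr k.factorial_ne_zero
  rw [Nat.factorial_succ]
  push_cast
  field_simp
  ring

private lemma w2_summable (y : ℝ) : Summable (fun k : ℕ => (k : ℝ) * y ^ k / k.factorial) := by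
  rw [← summable_nat_add_iff 1]
  simp only [w2_succ]
  exact (w1_summable y).mul_left y

private lemma w2_tsum (y : ℝ) :
    ∑' k : ℕ, (k : ℝ) * y ^ k / k.factorial = y * Real.exp y := by
  rw [Summable.tsum_eq_zero_add (w2_summable y)]
  simp only [w2_succ]
  rw [tsum_mul_left, w1_tsum]
  simp

private lemma w3_succ (y : ℝ) (k : ℕ) :
    ((k + 1 : ℕ) : ℝ) ^ 2 * y ^ (k + 1) / (k + 1).factorial =
      y * ((k : ℝ) * y ^ k / k.factorial + y ^ k / k.factorial) := by
  have h : ((k.factorial : ℝ)) ≠ 0 := Nat.cast_ne_zero.mpr k.factorial_ne_zero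
  rw [Nat.factorial_succ]
  push_cast
  field_simp
  ring

private lemma w3_summable (y : ℝ) :
    Summable (fun k : ℕ => (k : ℝ) ^ 2 * y ^ k / k.factorial) := by
  rw [← summable_nat_add_iff 1]
  simp only [w3_succ]
  exact ((w2_summable y).add (w1_summable y)).mul_left y

private lemma w3_tsum (y : ℝ) :
    ∑' k : ℕ, (k : ℝ) ^ 2 * y ^ k / k.factorial = (y ^ 2 + y) * Real.exp y := by
  rw [Summable.tsum_eq_zero_add (w3_summable y)]
  simp only [w3_succ]
  rw [tsum_mul_left, Summable.tsum_add (w2_summable y) (w1_summable y), w2_tsum, w1_tsum]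
  simp
  ring

/-- the second central moment `G_n((e₁ − x)²;x) = x/n + 6/n²` for the
operator attached to the multiple Sheffer polynomials `(x+1)^{k₁+k₂}`. -/
theorem Gxk_central_moment (x : ℝ) (hx : 0 ≤ x) (n : ℕ) (hn : 1 ≤ n) :
    Real.exp (-2 - n * x) *
        ∑' k : ℕ × ℕ, (n * x / 2 + 1) ^ (k.1 + k.2) / (k.1.factorial * k.2.factorial) *
          ((k.1 + k.2 : ℝ) / n - x) ^ 2 =
      x / n + 6 / (n : ℝ) ^ 2 := by
  set y : ℝ := n * x / 2 + 1 with hy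
  have hn0 : (n : ℝ) ≠ 0 := Nat.cast_ne_zero.mpr (by omega)
  have hy0 : 0 ≤ y := by positivity
  have hw1 : ∀ k : ℕ, 0 ≤ y ^ k / k.factorial := fun k => by positivity
  have hw2 : ∀ k : ℕ, 0 ≤ (k : ℝ) * y ^ k / k.factorial := fun k => by positivity
  have hw3 : ∀ k : ℕ, 0 ≤ (k : ℝ) ^ 2 * y ^ k / k.factorial := fun k => by positivity
  -- rewrite the summand
  have hterm : ∀ k : ℕ × ℕ,
      y ^ (k.1 + k.2) / (k.1.factorial * k.2.factorial) * ((k.1 + k.2 : ℝ) / n - x) ^ 2 =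
      (1 / n ^ 2) * (((k.1 : ℝ) ^ 2 * y ^ k.1 / k.1.factorial) * (y ^ k.2 / k.2.factorial)) +
      (2 / n ^ 2) * (((k.1 : ℝ) * y ^ k.1 / k.1.factorial) * ((k.2 : ℝ) * y ^ k.2 / k.2.factorial)) +
      (1 / n ^ 2) * ((y ^ k.1 / k.1.factorial) * ((k.2 : ℝ) ^ 2 * y ^ k.2 / k.2.factorial)) +
      (-(2 * x) / n) * (((k.1 : ℝ) * y ^ k.1 / k.1.factorial) * (y ^ k.2 / k.2.factorial)) +
      (-(2 * x) / n) * ((y ^ k.1 / k.1.factorial) * ((k.2 : ℝ) * y ^ k.2 / k.2.factorial)) +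
      x ^ 2 * ((y ^ k.1 / k.1.factorial) * (y ^ k.2 / k.2.factorial)) := by
    intro k
    have h1 : ((k.1.factorial : ℝ)) ≠ 0 := Nat.cast_ne_zero.mpr k.1.factorial_ne_zero
    have h2 : ((k.2.factorial : ℝ)) ≠ 0 := Nat.cast_ne_zero.mpr k.2.factorial_ne_zero
    rw [pow_add]
    field_simp
    ring
  rw [tsum_congr hterm]
  -- summability of product pieces
  have s11 := (w1_summable y).mul_of_nonneg (w1_summable y) hw1 hw1
  have s21 := (w2_summable y).mul_of_nonneg (w1_summable y) hw2 hw1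
  have s12 := (w1_summable y).mul_of_nonneg (w2_summable y) hw1 hw2
  have s22 := (w2_summable y).mul_of_nonneg (w2_summable y) hw2 hw2
  have s31 := (w3_summable y).mul_of_nonneg (w1_summable y) hw3 hw1
  have s13 := (w1_summable y).mul_of_nonneg (w3_summable y) hw1 hw3
  rw [Summable.tsum_add (((((s31.mul_left _).add (s22.mul_left _)).add (s13.mul_left _)).add
        (s21.mul_left _)).add (s12.mul_left _)) (s11.mul_left _),
      Summable.tsum_add ((((s31.mul_left _).add (s22.mul_left _)).add (s13.mul_left _)).add
        (s21.mul_left _)) (s12.mul_left _),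
      Summable.tsum_add (((s31.mul_left _).add (s22.mul_left _)).add (s13.mul_left _)) (s21.mul_left _),
      Summable.tsum_add ((s31.mul_left _).add (s22.mul_left _)) (s13.mul_left _),
      Summable.tsum_add (s31.mul_left _) (s22.mul_left _)]
  rw [tsum_mul_left, tsum_mul_left, tsum_mul_left, tsum_mul_left, tsum_mul_left, tsum_mul_left]
  rw [← Summable.tsum_mul_tsum (w3_summable y) (w1_summable y) s31,
      ← Summable.tsum_mul_tsum (w2_summable y) (w2_summable y) s22,
      ← Summable.tsum_mul_tsum (w1_summable y) (w3_summable y) s13,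
      ← Summable.tsum_mul_tsum (w2_summable y) (w1_summable y) s21,
      ← Summable.tsum_mul_tsum (w1_summable y) (w2_summable y) s12,
      ← Summable.tsum_mul_tsum (w1_summable y) (w1_summable y) s11]
  rw [w1_tsum, w2_tsum, w3_tsum]
  have hexp : Real.exp (-2 - n * x) * (Real.exp y * Real.exp y) = 1 := by
    rw [← Real.exp_add, ← Real.exp_add, ← Real.exp_zero]
    congr 1
    rw [hy]; ring
  have : Real.exp (-2 - n * x) *
      (1 / n ^ 2 * ((y ^ 2 + y) * Real.exp y * Real.exp y) +
       2 / n ^ 2 * (y * Real.exp y * (y * Real.exp y)) +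
       1 / n ^ 2 * (Real.exp y * ((y ^ 2 + y) * Real.exp y)) +
       -(2 * x) / n * (y * Real.exp y * Real.exp y) +
       -(2 * x) / n * (Real.exp y * (y * Real.exp y)) +
       x ^ 2 * (Real.exp y * Real.exp y)) =
      (Real.exp (-2 - n * x) * (Real.exp y * Real.exp y)) *
      (1 / n ^ 2 * (y ^ 2 + y) + 2 / n ^ 2 * (y * y) + 1 / n ^ 2 * (y ^ 2 + y) +
       -(2 * x) / n * y + -(2 * x) / n * y + x ^ 2) := by ring
  rw [this, hexp, one_mul, hy]
  field_simp
  ring
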